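/- Let ω ∈ (0,1) be a quadratic irrational and let Φ be the Farey map, Φ(x) = x/(1−x) for x ∈ [0,1/2] and Φ(x) = (1−x)/x for x ∈ [1/2,1]. Then ω is purely periodic under Φ (i.e. Φ^[p](ω) = ω for some integer p ≥ 1) if and only if its Galois conjugate ω' satisfies ω' < 0. -/

import Mathlib

/-- The Farey map `Φ(x) = min(x/(1-x), (1-x)/x)`, i.e. `x/(1-x)` on `[0,1/2]` and
`(1-x)/x` on `[1/2,1]`. -/
noncomputable def fareyMap (x : ℝ) : ℝ :=
  min (x / (1 - x)) ((1 - x) / x)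

lemma ratlin {x : ℝ} (hx : Irrational x) {q r : ℚ} (h : (q:ℝ) * x + r = 0) : q = 0 ∧ r = 0 := by
  rcases eq_or_ne q 0 with hq | hq
  · refine ⟨hq, ?_⟩
    have : (r:ℝ) = 0 := by rw [hq] at h; simpa using h
    exact_mod_cast this
  · exfalso
    apply hx
    refine ⟨(-r)/q, ?_⟩
    have hq' : (q:ℝ) ≠ 0 := by exact_mod_cast hq
    push_cast
    field_simp
    linarith

lemma intlin {x : ℝ} (hx : Irrational x) {m n : ℤ} (h : (m:ℝ) * x + n = 0) : m = 0 ∧ n = 0 := by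
  have := ratlin hx (q := (m:ℚ)) (r := (n:ℚ)) (by push_cast; linarith)
  exact ⟨by exact_mod_cast this.1, by exact_mod_cast this.2⟩

lemma irr_ne_half {x : ℝ} (hx : Irrational x) : x ≠ 1/2 := by
  intro h
  have h2 : ((2:ℚ):ℝ) * x + ((-1:ℚ):ℝ) = 0 := by push_cast; rw [h]; norm_num
  have := (ratlin hx h2).1
  norm_num at this

lemma farey_left {x : ℝ} (h0 : 0 < x) (h1 : x < 1/2) : fareyMap x = x / (1 - x) := by
  unfold fareyMap
  apply min_eq_left
  rw [div_le_div_iff₀ (by linarith) (by linarith)]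
  nlinarith

lemma farey_right {x : ℝ} (h0 : 1/2 < x) (h1 : x < 1) : fareyMap x = (1 - x) / x := by
  unfold fareyMap
  apply min_eq_right
  rw [div_le_div_iff₀ (by linarith) (by linarith)]
  nlinarith

lemma farey_mem {x : ℝ} (hx : x ∈ Set.Ioo (0:ℝ) 1) (hirr : Irrational x) :
    fareyMap x ∈ Set.Ioo (0:ℝ) 1 ∧ Irrational (fareyMap x) := by
  obtain ⟨h0, h1⟩ := hx
  rcases lt_or_gt_of_ne (irr_ne_half hirr) with hlt | hgt
  · rw [farey_left h0 hlt]
    have hx1 : (0:ℝ) < 1 - x := by linarith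
    refine ⟨⟨div_pos h0 hx1, (div_lt_one hx1).mpr (by linarith)⟩, ?_⟩
    intro ⟨t, ht⟩
    have ht' : (t:ℝ) * (1 - x) = x := by
      field_simp at ht; linarith
    have h2 : ((1 + t : ℚ):ℝ) * x + ((-t:ℚ):ℝ) = 0 := by
      push_cast
      linear_combination -ht'
    have := (ratlin hirr h2).2
    have h3 := (ratlin hirr h2).1
    simp at this
    rw [this] at h3
    norm_num at h3
  · rw [farey_right hgt h1]
    refine ⟨⟨div_pos (by linarith) (by linarith), (div_lt_one (by linarith)).mpr (by linarith)⟩, ?_⟩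
    intro ⟨t, ht⟩
    have ht' : (t:ℝ) * x = 1 - x := by
      field_simp at ht; linarith
    have h2 : ((1 + t : ℚ):ℝ) * x + ((-1:ℚ):ℝ) = 0 := by
      push_cast
      linear_combination ht'
    have h3 := (ratlin hirr h2).2
    norm_num at h3

lemma farey_orbit {x : ℝ} (hx : x ∈ Set.Ioo (0:ℝ) 1) (hirr : Irrational x) (n : ℕ) :
    fareyMap^[n] x ∈ Set.Ioo (0:ℝ) 1 ∧ Irrational (fareyMap^[n] x) := by
  induction n with
  | zero => exact ⟨hx, hirr⟩
  | succ n ih =>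
    rw [Function.iterate_succ_apply']
    exact farey_mem ih.1 ih.2

open scoped Classical in
noncomputable def fareyY (ω y0 : ℝ) : ℕ → ℝ
  | 0 => y0
  | n+1 =>
    if fareyMap^[n] ω < 1/2 then fareyY ω y0 n / (1 - fareyY ω y0 n)
    else (1 - fareyY ω y0 n) / fareyY ω y0 n

open scoped Classical in
noncomputable def fareyT (ω : ℝ) (t0 : ℤ × ℤ × ℤ) : ℕ → ℤ × ℤ × ℤ
  | 0 => t0
  | n+1 =>
    let t := fareyT ω t0 n
    if fareyMap^[n] ω < 1/2 then (t.1 + t.2.1 + t.2.2, t.2.1 + 2*t.2.2, t.2.2)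
    else (t.2.2, t.2.1 + 2*t.2.2, t.1 + t.2.1 + t.2.2)

lemma qstep_left {A B C : ℤ} {x x' : ℝ} (hx : (A:ℝ)*x^2 + B*x + C = 0)
    (hrel : x * (1 + x') = x') :
    ((A + B + C : ℤ):ℝ)*x'^2 + ((B + 2*C : ℤ):ℝ)*x' + ((C : ℤ):ℝ) = 0 := by
  push_cast
  linear_combination (1+x')^2 * hx - ((A:ℝ)*(x' + x*(1+x')) + (B:ℝ)*(1+x')) * hrel

lemma qstep_right {A B C : ℤ} {x x' : ℝ} (hx : (A:ℝ)*x^2 + B*x + C = 0)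
    (hrel : x * (1 + x') = 1) :
    ((C : ℤ):ℝ)*x'^2 + ((B + 2*C : ℤ):ℝ)*x' + ((A + B + C : ℤ):ℝ) = 0 := by
  push_cast
  linear_combination (1+x')^2 * hx - ((A:ℝ)*(x*(1+x') + 1) + (B:ℝ)*(1+x')) * hrel

lemma fareyY_succ_left {ω y0 : ℝ} {n : ℕ} (hx : fareyMap^[n] ω < 1/2) :
    fareyY ω y0 (n+1) = fareyY ω y0 n / (1 - fareyY ω y0 n) := by
  rw [fareyY, if_pos hx]

lemma fareyY_succ_right {ω y0 : ℝ} {n : ℕ} (hx : ¬ fareyMap^[n] ω < 1/2) :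
    fareyY ω y0 (n+1) = (1 - fareyY ω y0 n) / fareyY ω y0 n := by
  rw [fareyY, if_neg hx]

lemma fareyT_succ_left {ω : ℝ} {t0 : ℤ × ℤ × ℤ} {n : ℕ} (hx : fareyMap^[n] ω < 1/2) :
    fareyT ω t0 (n+1) = ((fareyT ω t0 n).1 + (fareyT ω t0 n).2.1 + (fareyT ω t0 n).2.2,
      (fareyT ω t0 n).2.1 + 2*(fareyT ω t0 n).2.2, (fareyT ω t0 n).2.2) := by
  rw [fareyT, if_pos hx]

lemma fareyT_succ_right {ω : ℝ} {t0 : ℤ × ℤ × ℤ} {n : ℕ} (hx : ¬ fareyMap^[n] ω < 1/2) :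
    fareyT ω t0 (n+1) = ((fareyT ω t0 n).2.2,
      (fareyT ω t0 n).2.1 + 2*(fareyT ω t0 n).2.2,
      (fareyT ω t0 n).1 + (fareyT ω t0 n).2.1 + (fareyT ω t0 n).2.2) := by
  rw [fareyT, if_neg hx]

lemma rel_of_left {u v : ℝ} (h : v = u/(1-u)) (hu : (1:ℝ) - u ≠ 0) : u * (1 + v) = v := by
  field_simp at h
  linear_combination -h

lemma rel_of_right {u v : ℝ} (h : v = (1-u)/u) (hu : u ≠ 0) : u * (1 + v) = 1 := by
  field_simp at h
  linear_combination h

lemma conj_left {y : ℝ} (hy : y < 0) : -1 < y/(1-y) ∧ y/(1-y) < 0 := by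
  have h1 : (0:ℝ) < 1 - y := by linarith
  constructor
  · rw [lt_div_iff₀ h1]; linarith
  · exact div_neg_of_neg_of_pos hy h1

lemma conj_right {y : ℝ} (hy : y < 0) : (1-y)/y < -1 := by
  rw [div_lt_iff_of_neg hy]; linarith

lemma vieta {A B C : ℤ} {x y : ℝ} (hxy : x ≠ y)
    (h1 : (A:ℝ)*x^2 + B*x + C = 0) (h2 : (A:ℝ)*y^2 + B*y + C = 0) :
    (B:ℝ) = -A*(x+y) ∧ (C:ℝ) = A*(x*y) := by
  have hd : x - y ≠ 0 := sub_ne_zero.mpr hxy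
  have hB : (x-y) * ((A:ℝ)*(x+y) + B) = 0 := by linear_combination h1 - h2
  have hB' : (A:ℝ)*(x+y) + B = 0 := by
    rcases mul_eq_zero.mp hB with h | h
    · exact absurd h hd
    · exact h
  exact ⟨by linarith, by linear_combination h1 - x*hB'⟩

lemma lead_ne {A B C : ℤ} {x : ℝ} (hx : Irrational x)
    (h : (A:ℝ)*x^2 + B*x + C = 0) (hne : ¬(A = 0 ∧ B = 0 ∧ C = 0)) : A ≠ 0 := by
  intro hA
  have h' : (B:ℝ)*x + C = 0 := by rw [hA] at h; push_cast at h; linarith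
  obtain ⟨hB, hC⟩ := intlin hx h'
  exact hne ⟨hA, hB, hC⟩

lemma fareyT_disc (ω : ℝ) (t0 : ℤ × ℤ × ℤ) (n : ℕ) :
    (fareyT ω t0 n).2.1^2 - 4*(fareyT ω t0 n).1*(fareyT ω t0 n).2.2
      = t0.2.1^2 - 4*t0.1*t0.2.2 := by
  induction n with
  | zero => rfl
  | succ n ih =>
    by_cases hx : fareyMap^[n] ω < 1/2
    · rw [fareyT_succ_left hx]; simp only; ring_nf; ring_nf at ih; linarith
    · rw [fareyT_succ_right hx]; simp only; ring_nf; ring_nf at ih; linarith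

lemma inv_main (ω : ℝ) (hmem : ω ∈ Set.Ioo (0:ℝ) 1) (hirr : Irrational ω)
    (a b c : ℤ) (ha : a ≠ 0)
    (hroot : (a:ℝ) * ω^2 + (b:ℝ)*ω + (c:ℝ) = 0)
    (hneg : -(b:ℝ)/(a:ℝ) - ω < 0) :
    ∀ n, fareyY ω (-(b:ℝ)/(a:ℝ) - ω) n < 0 ∧
      ((fareyT ω (a,b,c) n).1:ℝ) * (fareyMap^[n] ω)^2
        + ((fareyT ω (a,b,c) n).2.1:ℝ) * (fareyMap^[n] ω) + ((fareyT ω (a,b,c) n).2.2:ℝ) = 0 ∧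
      ((fareyT ω (a,b,c) n).1:ℝ) * (fareyY ω (-(b:ℝ)/(a:ℝ) - ω) n)^2
        + ((fareyT ω (a,b,c) n).2.1:ℝ) * (fareyY ω (-(b:ℝ)/(a:ℝ) - ω) n)
        + ((fareyT ω (a,b,c) n).2.2:ℝ) = 0 ∧
      ¬((fareyT ω (a,b,c) n).1 = 0 ∧ (fareyT ω (a,b,c) n).2.1 = 0 ∧ (fareyT ω (a,b,c) n).2.2 = 0) := by
  have haR : (a:ℝ) ≠ 0 := Int.cast_ne_zero.mpr ha
  intro n
  induction n with
  | zero =>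
    refine ⟨hneg, ?_, ?_, ?_⟩
    · simpa [fareyT] using hroot
    · show (a:ℝ) * (-(b:ℝ)/(a:ℝ) - ω)^2 + (b:ℝ) * (-(b:ℝ)/(a:ℝ) - ω) + (c:ℝ) = 0
      field_simp
      linear_combination (a:ℝ) * hroot
    · simp [fareyT]
      intro h; exact absurd h ha
  | succ n ih =>
    obtain ⟨ihY, ihrX, ihrY, ihne⟩ := ih
    obtain ⟨hxm, hxirr⟩ := farey_orbit hmem hirr n
    obtain ⟨hx0, hx1⟩ := hxm
    have hyne : (1:ℝ) - fareyY ω (-(b:ℝ)/(a:ℝ) - ω) n ≠ 0 := by linarith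
    have hyne0 : fareyY ω (-(b:ℝ)/(a:ℝ) - ω) n ≠ 0 := ne_of_lt ihY
    by_cases hlt : fareyMap^[n] ω < 1/2
    · have hX' : fareyMap^[n+1] ω = fareyMap^[n] ω / (1 - fareyMap^[n] ω) := by
        rw [Function.iterate_succ_apply', farey_left hx0 hlt]
      have hrelX := rel_of_left hX' (by linarith)
      have hY' := fareyY_succ_left (ω := ω) (y0 := -(b:ℝ)/(a:ℝ) - ω) hlt
      have hrelY := rel_of_left hY' hyne
      rw [fareyT_succ_left hlt]
      refine ⟨by rw [hY']; exact (conj_left ihY).2, ?_, ?_, ?_⟩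
      · simpa using qstep_left ihrX hrelX
      · simpa using qstep_left ihrY hrelY
      · simp only
        rintro ⟨h1, h2, h3⟩
        exact ihne ⟨by omega, by omega, h3⟩
    · have hgt : 1/2 < fareyMap^[n] ω := lt_of_le_of_ne (not_lt.mp hlt) (Ne.symm (irr_ne_half hxirr))
      have hX' : fareyMap^[n+1] ω = (1 - fareyMap^[n] ω) / fareyMap^[n] ω := by
        rw [Function.iterate_succ_apply', farey_right hgt hx1]
      have hrelX := rel_of_right hX' (ne_of_gt hx0)
      have hY' := fareyY_succ_right (ω := ω) (y0 := -(b:ℝ)/(a:ℝ) - ω) hlt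
      have hrelY := rel_of_right hY' hyne0
      rw [fareyT_succ_right hlt]
      refine ⟨by rw [hY']; exact lt_trans (conj_right ihY) (by norm_num), ?_, ?_, ?_⟩
      · simpa using qstep_right ihrX hrelX
      · simpa using qstep_right ihrY hrelY
      · simp only
        rintro ⟨h1, h2, h3⟩
        exact ihne ⟨by omega, by omega, h1⟩

lemma forward_main (ω : ℝ) (hmem : ω ∈ Set.Ioo (0:ℝ) 1) (hirr : Irrational ω)
    (a b c : ℤ) (ha : a ≠ 0)
    (hroot : (a:ℝ) * ω^2 + (b:ℝ)*ω + (c:ℝ) = 0)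
    (hper : ∃ p : ℕ, 1 ≤ p ∧ fareyMap^[p] ω = ω) :
    -(b:ℝ)/(a:ℝ) - ω < 0 := by
  have haR : (a:ℝ) ≠ 0 := Int.cast_ne_zero.mpr ha
  obtain ⟨p, hp1, hpfix⟩ := hper
  have key : ∀ n : ℕ, ∃ P Q R S : ℤ, 0 ≤ P ∧ 0 ≤ Q ∧ 0 ≤ R ∧ 1 ≤ S ∧ (1 ≤ n → 1 ≤ R) ∧
      ω * ((R:ℝ) * fareyMap^[n] ω + S) = (P:ℝ) * fareyMap^[n] ω + Q := by
    intro n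
    induction n with
    | zero =>
      exact ⟨1, 0, 0, 1, by norm_num, by norm_num, by norm_num, le_refl 1, by omega,
        by push_cast; simp⟩
    | succ n ih =>
      obtain ⟨P, Q, R, S, hP, hQ, hR, hS, _, hrel⟩ := ih
      obtain ⟨⟨hx0, hx1⟩, hxirr⟩ := farey_orbit hmem hirr n
      by_cases hlt : fareyMap^[n] ω < 1/2
      · have hX' : fareyMap^[n+1] ω = fareyMap^[n] ω / (1 - fareyMap^[n] ω) := by
          rw [Function.iterate_succ_apply', farey_left hx0 hlt]
        have hrelX := rel_of_left hX' (by linarith)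
        refine ⟨P + Q, Q, R + S, S, by omega, hQ, by omega, hS, fun _ => by omega, ?_⟩
        push_cast
        linear_combination (1 + fareyMap^[n+1] ω) * hrel
          + ((P:ℝ) - ω * R) * hrelX
      · have hgt : 1/2 < fareyMap^[n] ω :=
          lt_of_le_of_ne (not_lt.mp hlt) (Ne.symm (irr_ne_half hxirr))
        have hX' : fareyMap^[n+1] ω = (1 - fareyMap^[n] ω) / fareyMap^[n] ω := by
          rw [Function.iterate_succ_apply', farey_right hgt hx1]
        have hrelX := rel_of_right hX' (ne_of_gt hx0)
        refine ⟨Q, P + Q, S, R + S, hQ, by omega, by omega, by omega, fun _ => by omega, ?_⟩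
        push_cast
        linear_combination (1 + fareyMap^[n+1] ω) * hrel
          + ((P:ℝ) - ω * R) * hrelX
  obtain ⟨P, Q, R, S, hP, hQ, hR, hS, hR1, hrel⟩ := key p
  have hR1 : 1 ≤ R := hR1 hp1
  rw [hpfix] at hrel
  have h2 : (R:ℝ) * ω^2 + ((S:ℝ) - (P:ℝ)) * ω + (-(Q:ℝ)) = 0 := by
    linear_combination hrel
  -- compare with hroot
  have h3 : ((a*(S - P) - R*b : ℤ):ℝ) * ω + ((-(a*Q) - R*c : ℤ):ℝ) = 0 := by
    push_cast
    linear_combination (a:ℝ) * h2 - (R:ℝ) * hroot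
  obtain ⟨h4, h5⟩ := intlin hirr h3
  -- h5 : -(a*Q) - R*c = 0
  have hQ1 : 1 ≤ Q := by
    rcases eq_or_lt_of_le hQ with hQ0 | h
    · exfalso
      have h6 : ((R:ℝ)) * ω + ((S - P : ℤ):ℝ) = 0 := by
        have hω0 : ω ≠ 0 := ne_of_gt hmem.1
        have hQ0' : (Q:ℝ) = 0 := by rw [← hQ0]; norm_num
        have : ω * ((R:ℝ) * ω + ((S - P : ℤ):ℝ)) = 0 := by
          push_cast
          linear_combination h2 + hQ0'
        rcases mul_eq_zero.mp this with h | h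
        · exact absurd h hω0
        · exact h
      have := (intlin hirr h6).1
      omega
    · omega
  -- a * ω * ω' = c
  set ω' := -(b:ℝ)/(a:ℝ) - ω with hω'
  have hc : (a:ℝ) * (ω * ω') = c := by
    rw [hω']
    field_simp
    linear_combination -hroot
  -- R * (ω * ω') = -Q
  have h7 : (R:ℝ) * (ω * ω') = -(Q:ℝ) := by
    have h8 : (a:ℝ) * ((R:ℝ) * (ω * ω') + Q) = 0 := by
      have h5' : (-(a*Q) - R*c : ℝ) = 0 := by exact_mod_cast congrArg (Int.cast : ℤ → ℝ) h5
      push_cast at h5'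
      linear_combination (R:ℝ) * hc - h5'
    have := mul_eq_zero.mp h8
    rcases this with h | h
    · exact absurd h haR
    · linarith
  by_contra hcon
  push_neg at hcon
  have hω0 : 0 < ω := hmem.1
  have hQR : (1:ℝ) ≤ Q := by exact_mod_cast hQ1
  have hRR : (1:ℝ) ≤ R := by exact_mod_cast hR1
  nlinarith [mul_nonneg (le_of_lt hω0) hcon]

lemma conj_unique {A1 B1 C1 A2 B2 C2 : ℤ} {w y1 y2 : ℝ} (hw : Irrational w)
    (h1w : (A1:ℝ)*w^2 + B1*w + C1 = 0) (h1y : (A1:ℝ)*y1^2 + B1*y1 + C1 = 0)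
    (h2w : (A2:ℝ)*w^2 + B2*w + C2 = 0) (h2y : (A2:ℝ)*y2^2 + B2*y2 + C2 = 0)
    (hA1 : A1 ≠ 0) (hA2 : A2 ≠ 0) (hy1w : w ≠ y1) (hy2w : w ≠ y2) : y1 = y2 := by
  have hB1 := (vieta hy1w h1w h1y).1
  have hB2 := (vieta hy2w h2w h2y).1
  have h3 : ((A2*B1 - A1*B2 : ℤ):ℝ) * w + ((A2*C1 - A1*C2 : ℤ):ℝ) = 0 := by
    push_cast
    linear_combination (A2:ℝ) * h1w - (A1:ℝ) * h2w
  have h4 := (intlin hw h3).1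
  have h4' : ((A2*B1 : ℤ):ℝ) = ((A1*B2 : ℤ):ℝ) := by
    exact_mod_cast congrArg (Int.cast : ℤ → ℝ) (by omega : A2*B1 = A1*B2)
  push_cast at h4'
  have hA1R : (A1:ℝ) ≠ 0 := Int.cast_ne_zero.mpr hA1
  have hA2R : (A2:ℝ) ≠ 0 := Int.cast_ne_zero.mpr hA2
  have h5 : (A1:ℝ) * A2 * (y1 - y2) = 0 := by
    rw [hB1] at h4'
    rw [hB2] at h4'
    ring_nf at h4' ⊢
    linarith
  have := mul_eq_zero.mp h5
  rcases this with h | h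
  · exact absurd h (mul_ne_zero hA1R hA2R)
  · linarith

lemma inj_step (ω : ℝ) (hmem : ω ∈ Set.Ioo (0:ℝ) 1) (hirr : Irrational ω)
    (a b c : ℤ) (ha : a ≠ 0)
    (hroot : (a:ℝ) * ω^2 + (b:ℝ)*ω + (c:ℝ) = 0)
    (hneg : -(b:ℝ)/(a:ℝ) - ω < 0) (i k : ℕ)
    (h : fareyMap^[i+1] ω = fareyMap^[k+1] ω) : fareyMap^[i] ω = fareyMap^[k] ω := by
  have inv := inv_main ω hmem hirr a b c ha hroot hneg
  obtain ⟨⟨hu0, hu1⟩, huirr⟩ := farey_orbit hmem hirr i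
  obtain ⟨⟨hv0, hv1⟩, hvirr⟩ := farey_orbit hmem hirr k
  obtain ⟨⟨hw0, hw1⟩, hwirr⟩ := farey_orbit hmem hirr (i+1)
  have hYi0 : fareyY ω (-(b:ℝ)/(a:ℝ) - ω) i < 0 := (inv i).1
  have hYk0 : fareyY ω (-(b:ℝ)/(a:ℝ) - ω) k < 0 := (inv k).1
  by_cases hui : fareyMap^[i] ω < 1/2 <;> by_cases hvk : fareyMap^[k] ω < 1/2
  · -- both left
    have hXi : fareyMap^[i+1] ω = fareyMap^[i] ω / (1 - fareyMap^[i] ω) := by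
      rw [Function.iterate_succ_apply', farey_left hu0 hui]
    have hXk : fareyMap^[k+1] ω = fareyMap^[k] ω / (1 - fareyMap^[k] ω) := by
      rw [Function.iterate_succ_apply', farey_left hv0 hvk]
    rw [hXi, hXk, div_eq_div_iff (by linarith) (by linarith)] at h
    nlinarith [h]
  · -- i left, k right : contradiction
    exfalso
    have hgt : 1/2 < fareyMap^[k] ω :=
      lt_of_le_of_ne (not_lt.mp hvk) (Ne.symm (irr_ne_half hvirr))
    have hYi := fareyY_succ_left (ω := ω) (y0 := -(b:ℝ)/(a:ℝ) - ω) hui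
    have hYk := fareyY_succ_right (ω := ω) (y0 := -(b:ℝ)/(a:ℝ) - ω) hvk
    have hy1a : -1 < fareyY ω (-(b:ℝ)/(a:ℝ) - ω) (i+1) := by
      rw [hYi]; exact (conj_left hYi0).1
    have hy1b : fareyY ω (-(b:ℝ)/(a:ℝ) - ω) (i+1) < 0 := by
      rw [hYi]; exact (conj_left hYi0).2
    have hy2 : fareyY ω (-(b:ℝ)/(a:ℝ) - ω) (k+1) < -1 := by
      rw [hYk]; exact conj_right hYk0
    have rootXi := (inv (i+1)).2.1
    have rootYi := (inv (i+1)).2.2.1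
    have rootXk := (inv (k+1)).2.1
    have rootYk := (inv (k+1)).2.2.1
    rw [← h] at rootXk
    have hA1 := lead_ne hwirr rootXi (inv (i+1)).2.2.2
    have hA2 := lead_ne hwirr rootXk (inv (k+1)).2.2.2
    have heq := conj_unique hwirr rootXi rootYi rootXk rootYk hA1 hA2
      (by intro hh; linarith [hh ▸ hw0]) (by intro hh; linarith [hh ▸ hw0])
    linarith
  · -- i right, k left : symmetric
    exfalso
    have hgt : 1/2 < fareyMap^[i] ω :=
      lt_of_le_of_ne (not_lt.mp hui) (Ne.symm (irr_ne_half huirr))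
    have hYi := fareyY_succ_right (ω := ω) (y0 := -(b:ℝ)/(a:ℝ) - ω) hui
    have hYk := fareyY_succ_left (ω := ω) (y0 := -(b:ℝ)/(a:ℝ) - ω) hvk
    have hy1a : -1 < fareyY ω (-(b:ℝ)/(a:ℝ) - ω) (k+1) := by
      rw [hYk]; exact (conj_left hYk0).1
    have hy1b : fareyY ω (-(b:ℝ)/(a:ℝ) - ω) (k+1) < 0 := by
      rw [hYk]; exact (conj_left hYk0).2
    have hy2 : fareyY ω (-(b:ℝ)/(a:ℝ) - ω) (i+1) < -1 := by
      rw [hYi]; exact conj_right hYi0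
    have rootXi := (inv (i+1)).2.1
    have rootYi := (inv (i+1)).2.2.1
    have rootXk := (inv (k+1)).2.1
    have rootYk := (inv (k+1)).2.2.1
    rw [← h] at rootXk
    have hA1 := lead_ne hwirr rootXi (inv (i+1)).2.2.2
    have hA2 := lead_ne hwirr rootXk (inv (k+1)).2.2.2
    have heq := conj_unique hwirr rootXi rootYi rootXk rootYk hA1 hA2
      (by intro hh; linarith [hh ▸ hw0]) (by intro hh; linarith [hh ▸ hw0])
    linarith
  · -- both right
    have hgti : 1/2 < fareyMap^[i] ω :=
      lt_of_le_of_ne (not_lt.mp hui) (Ne.symm (irr_ne_half huirr))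
    have hgtk : 1/2 < fareyMap^[k] ω :=
      lt_of_le_of_ne (not_lt.mp hvk) (Ne.symm (irr_ne_half hvirr))
    have hXi : fareyMap^[i+1] ω = (1 - fareyMap^[i] ω) / fareyMap^[i] ω := by
      rw [Function.iterate_succ_apply', farey_right hgti hu1]
    have hXk : fareyMap^[k+1] ω = (1 - fareyMap^[k] ω) / fareyMap^[k] ω := by
      rw [Function.iterate_succ_apply', farey_right hgtk hv1]
    rw [hXi, hXk, div_eq_div_iff (by linarith) (by linarith)] at h
    nlinarith [h]

lemma exists_cross {P : ℕ → Prop} :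
    ∀ j i, i < j → P i → ¬ P j → ∃ n, i ≤ n ∧ P n ∧ ¬ P (n+1) := by
  intro j
  induction j with
  | zero => intro i h; omega
  | succ j ih =>
    intro i hij hPi hPj1
    rcases eq_or_lt_of_le (Nat.lt_succ_iff.mp hij) with heq | hlt
    · exact ⟨i, le_refl i, hPi, by rw [heq]; exact hPj1⟩
    · by_cases hPj : P j
      · exact ⟨j, by omega, hPj, hPj1⟩
      · exact ih i hlt hPi hPj

lemma int_bounds {t M : ℤ} (hM : 1 ≤ M) (h : t^2 ≤ M) : -M ≤ t ∧ t ≤ M := by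
  constructor
  · nlinarith [sq_nonneg (t+1)]
  · nlinarith [sq_nonneg (t-1)]

set_option maxHeartbeats 2000000 in
lemma repeat_main (ω : ℝ) (hmem : ω ∈ Set.Ioo (0:ℝ) 1) (hirr : Irrational ω)
    (a b c : ℤ) (ha : a ≠ 0)
    (hroot : (a:ℝ) * ω^2 + (b:ℝ)*ω + (c:ℝ) = 0)
    (hneg : -(b:ℝ)/(a:ℝ) - ω < 0) :
    ∃ n m : ℕ, n < m ∧ fareyMap^[n] ω = fareyMap^[m] ω := by
  have inv := inv_main ω hmem hirr a b c ha hroot hneg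
  by_cases hA : ∃ N, ∀ n, N ≤ n → ¬ fareyMap^[n] ω < 1/2
  · -- eventually always right branch: the tail is the golden point
    obtain ⟨N, hall⟩ := hA
    set g : ℝ := (Real.sqrt 5 - 1)/2 with hgdef
    have hs : Real.sqrt 5 ^ 2 = 5 := Real.sq_sqrt (by norm_num)
    have hs0 : (0:ℝ) ≤ Real.sqrt 5 := Real.sqrt_nonneg 5
    have h2s : (2:ℝ) < Real.sqrt 5 := by nlinarith
    have hs3 : Real.sqrt 5 < 3 := by nlinarith
    have hg1 : 1/2 < g := by rw [hgdef]; linarith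
    have hg2 : g < 1 := by rw [hgdef]; linarith
    have hgq : g^2 = 1 - g := by rw [hgdef]; nlinarith
    have hg0 : g ≠ 0 := by intro h; rw [h] at hg1; linarith
    have hmemk : ∀ k, 1/2 < fareyMap^[N+k] ω ∧ fareyMap^[N+k] ω < 1 := by
      intro k
      obtain ⟨⟨hx0, hx1⟩, hxirr⟩ := farey_orbit hmem hirr (N+k)
      exact ⟨lt_of_le_of_ne (not_lt.mp (hall (N+k) (by omega)))
        (Ne.symm (irr_ne_half hxirr)), hx1⟩
    have hstep : ∀ k, fareyMap^[N+k+1] ω = (1 - fareyMap^[N+k] ω) / fareyMap^[N+k] ω := by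
      intro k
      obtain ⟨h1, h2⟩ := hmemk k
      rw [Function.iterate_succ_apply', farey_right h1 h2]
    have claim : ∀ k : ℕ, 2^k * (fareyMap^[N] ω - g)^2 ≤ (fareyMap^[N+k] ω - g)^2 := by
      intro k
      induction k with
      | zero => simp
      | succ k ih =>
        obtain ⟨hx0, hx1⟩ := hmemk k
        have key : (fareyMap^[N+k+1] ω - g) * (fareyMap^[N+k] ω * g)
            = g - fareyMap^[N+k] ω := by
          rw [hstep k]
          field_simp
          linear_combination (fareyMap^[N+k] ω : ℝ) * hgq
            - (fareyMap^[N+k] ω)/2 * hs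
        have hsq : (fareyMap^[N+k+1] ω - g)^2 * (fareyMap^[N+k] ω * g)^2
            = (g - fareyMap^[N+k] ω)^2 := by
          rw [← key]; ring
        have hxg : (fareyMap^[N+k] ω * g)^2 ≤ 1/2 := by
          have h1 : (fareyMap^[N+k] ω)^2*g^2 ≤ g^2 := by
            nlinarith [mul_nonneg (by nlinarith : (0:ℝ) ≤ 1 - (fareyMap^[N+k] ω)^2)
              (sq_nonneg g)]
          nlinarith [h1]
        have h2' : 2*(g - fareyMap^[N+k] ω)^2 ≤ (fareyMap^[N+k+1] ω - g)^2 := by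
          have h3 := mul_le_mul_of_nonneg_left hxg (sq_nonneg (fareyMap^[N+k+1] ω - g))
          linarith [hsq, h3]
        have e : N+(k+1) = (N+k)+1 := by omega
        rw [e, pow_succ]
        have hflip : (g - fareyMap^[N+k] ω)^2 = (fareyMap^[N+k] ω - g)^2 := by ring
        rw [hflip] at h2'
        linarith [ih, h2']
    have hXNg : fareyMap^[N] ω = g := by
      by_contra hne
      have hd0 : 0 < (fareyMap^[N] ω - g)^2 := by
        have := sub_ne_zero.mpr hne
        positivity
      obtain ⟨k, hk⟩ := pow_unbounded_of_one_lt (1/(fareyMap^[N] ω - g)^2)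
        (by norm_num : (1:ℝ) < 2)
      have h1 : 1 < 2^k * (fareyMap^[N] ω - g)^2 := by
        rw [div_lt_iff₀ hd0] at hk
        nlinarith
      obtain ⟨hy0, hy1⟩ := hmemk k
      have h2' : (fareyMap^[N+k] ω - g)^2 < 1 := by nlinarith
      have := claim k
      linarith
    refine ⟨N, N+1, by omega, ?_⟩
    have h1 : fareyMap^[N+1] ω = (1 - fareyMap^[N] ω) / fareyMap^[N] ω := by
      simpa using hstep 0
    rw [h1, hXNg, eq_comm, div_eq_iff hg0]
    linear_combination -hgq
  · push_neg at hA
    by_cases hB : ∃ N, ∀ n, N ≤ n → fareyMap^[n] ω < 1/2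
    · -- eventually always left branch: impossible
      exfalso
      obtain ⟨N, hall⟩ := hB
      have hx0 : 0 < fareyMap^[N] ω := (farey_orbit hmem hirr N).1.1
      have claim : ∀ k : ℕ, fareyMap^[N] ω + k * (fareyMap^[N] ω)^2 ≤ fareyMap^[N+k] ω := by
        intro k
        induction k with
        | zero => simp
        | succ k ih =>
          have hxk0 : 0 < fareyMap^[N+k] ω := (farey_orbit hmem hirr (N+k)).1.1
          have hxk : fareyMap^[N+k] ω < 1/2 := hall (N+k) (by omega)
          have hstep : fareyMap^[N+k+1] ω
              = fareyMap^[N+k] ω / (1 - fareyMap^[N+k] ω) := by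
            rw [Function.iterate_succ_apply', farey_left hxk0 hxk]
          have e : N+(k+1) = (N+k)+1 := by omega
          rw [e, hstep, le_div_iff₀ (by linarith)]
          have hXNle : fareyMap^[N] ω ≤ fareyMap^[N+k] ω := by
            nlinarith [ih, mul_nonneg (Nat.cast_nonneg k : (0:ℝ) ≤ (k:ℝ))
              (sq_nonneg (fareyMap^[N] ω))]
          have hsq : (fareyMap^[N] ω)^2 ≤ (fareyMap^[N+k] ω)^2 := by nlinarith
          have hmul := mul_le_mul_of_nonneg_right ih
            (by linarith : (0:ℝ) ≤ 1 - fareyMap^[N+k] ω)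
          have hterm : 0 ≤ (fareyMap^[N] ω)^2 * fareyMap^[N+k] ω := by positivity
          push_cast
          nlinarith [hmul, hsq, hterm]
      obtain ⟨k, hk⟩ := exists_nat_gt ((1/2 - fareyMap^[N] ω)/(fareyMap^[N] ω)^2)
      have h1 : 1/2 < fareyMap^[N] ω + k * (fareyMap^[N] ω)^2 := by
        rw [div_lt_iff₀ (by positivity)] at hk
        nlinarith
      have h2 := claim k
      have h3 := hall (N+k) (by omega)
      linarith
    · -- infinitely many lefts and rights: Lagrange finiteness
      push_neg at hB
      set Y : ℕ → ℝ := fareyY ω (-(b:ℝ)/(a:ℝ) - ω) with hYdef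
      set T : ℕ → ℤ × ℤ × ℤ := fareyT ω (a,b,c) with hTdef
      set G : Set ℕ := {n | 1/2 < fareyMap^[n] ω ∧ -1 < Y n} with hGdef
      have hGgt : ∀ N, ∃ n ∈ G, N < n := by
        intro N
        obtain ⟨i, hiN, hi⟩ := hA (N+1)
        obtain ⟨j, hji, hj⟩ := hB (i+1)
        obtain ⟨n, hin, hPn, hPn1⟩ := exists_cross (P := fun m => fareyMap^[m] ω < 1/2)
          j i (by omega) hi (not_lt.mpr hj)
        refine ⟨n+1, ?_, by omega⟩
        constructor
        · exact lt_of_le_of_ne (not_lt.mp hPn1)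
            (Ne.symm (irr_ne_half (farey_orbit hmem hirr (n+1)).2))
        · have : Y (n+1) = Y n / (1 - Y n) := fareyY_succ_left hPn
          rw [this]
          exact (conj_left (inv n).1).1
      have hGinf : G.Infinite := Set.infinite_of_forall_exists_gt hGgt
      -- bounds on coefficients at good times
      set D : ℤ := b^2 - 4*a*c with hDdef
      have hbound : ∀ n ∈ G, (T n).1^2 ≤ 4*D ∧ (T n).2.1^2 ≤ 4*D ∧ (T n).2.2^2 ≤ 4*D := by
        intro n hn
        obtain ⟨hXg, hYg⟩ := hn
        obtain ⟨⟨hX0, hX1⟩, hXirr⟩ := farey_orbit hmem hirr n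
        have hY0 : Y n < 0 := (inv n).1
        have rootX := (inv n).2.1
        have rootY := (inv n).2.2.1
        have hAne : (T n).1 ≠ 0 := lead_ne hXirr rootX (inv n).2.2.2
        have hAne1 : 1 ≤ (T n).1^2 := by
          rcases lt_or_gt_of_ne hAne with h | h <;> nlinarith
        have hv := vieta (show fareyMap^[n] ω ≠ Y n by intro h; rw [h] at hX0; linarith)
          rootX rootY
        have hdisc := fareyT_disc ω (a,b,c) n
        have hd2 : ((T n).2.1^2 - 4*(T n).1*(T n).2.2 : ℤ) = D := by
          rw [hDdef]; exact hdisc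
        have hdiscR : ((T n).2.1:ℝ)^2 - 4*((T n).1:ℝ)*((T n).2.2:ℝ) = (D:ℝ) := by
          have h3 := congrArg (fun z : ℤ => (z:ℝ)) hd2
          push_cast at h3
          linarith [h3]
        have hident : ((T n).2.1:ℝ)^2 - 4*((T n).1:ℝ)*((T n).2.2:ℝ)
            = ((T n).1:ℝ)^2 * (fareyMap^[n] ω - Y n)^2 := by
          rw [hv.1, hv.2]; ring
        have hgap : 1/2 < fareyMap^[n] ω - Y n := by linarith
        have hgap2 : fareyMap^[n] ω - Y n < 2 := by linarith
        have hA2 : ((T n).1:ℝ)^2 ≤ 4*(D:ℝ) := by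
          nlinarith [mul_nonneg (sq_nonneg ((T n).1:ℝ))
            (by nlinarith : (0:ℝ) ≤ 4*(fareyMap^[n] ω - Y n)^2 - 1)]
        have hsum : (fareyMap^[n] ω + Y n)^2 ≤ 1 := by
          nlinarith [mul_pos (by linarith : (0:ℝ) < 1 - (fareyMap^[n] ω + Y n))
            (by linarith : (0:ℝ) < 1 + (fareyMap^[n] ω + Y n))]
        have hXY0 : fareyMap^[n] ω * Y n < 0 := mul_neg_of_pos_of_neg hX0 hY0
        have hXY1 : -1 < fareyMap^[n] ω * Y n := by
          nlinarith [mul_pos (by linarith : (0:ℝ) < 1 - fareyMap^[n] ω)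
            (by linarith : (0:ℝ) < -(Y n))]
        have hprod : (fareyMap^[n] ω * Y n)^2 ≤ 1 := by
          nlinarith [mul_pos (by linarith : (0:ℝ) < 1 - fareyMap^[n] ω * Y n)
            (by linarith : (0:ℝ) < 1 + fareyMap^[n] ω * Y n)]
        have hB2 : ((T n).2.1:ℝ)^2 ≤ 4*(D:ℝ) := by
          rw [hv.1]
          nlinarith [mul_nonneg (sq_nonneg ((T n).1:ℝ))
            (by linarith : (0:ℝ) ≤ 1 - (fareyMap^[n] ω + Y n)^2), hA2]
        have hC2 : ((T n).2.2:ℝ)^2 ≤ 4*(D:ℝ) := by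
          rw [hv.2]
          nlinarith [mul_nonneg (sq_nonneg ((T n).1:ℝ))
            (by linarith : (0:ℝ) ≤ 1 - (fareyMap^[n] ω * Y n)^2), hA2]
        have toInt : ∀ t : ℤ, (t:ℝ)^2 ≤ 4*(D:ℝ) → t^2 ≤ 4*D := by
          intro t ht
          exact_mod_cast (by push_cast; linarith : ((t^2:ℤ):ℝ) ≤ ((4*D:ℤ):ℝ))
        exact ⟨toInt _ hA2, toInt _ hB2, toInt _ hC2⟩
      -- pigeonhole: two good times share the same coefficient triple
      -- pigeonhole: two good times share the same coefficient triple
      have hD1 : 1 ≤ D := by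
        obtain ⟨n, hn, -⟩ := hGgt 0
        obtain ⟨hA2, -, -⟩ := hbound n hn
        have hAne : (T n).1 ≠ 0 :=
          lead_ne (farey_orbit hmem hirr n).2 (inv n).2.1 (inv n).2.2.2
        have h1 : 1 ≤ (T n).1^2 := by rcases hAne.lt_or_gt with h | h <;> nlinarith
        omega
      have hM4 : (1:ℤ) ≤ 4*D := by omega
      obtain ⟨n, hn, m, hm, hne, heq⟩ := hGinf.exists_ne_map_eq_of_mapsTo
        (f := T) (t := Set.Icc ((-(4*D), -(4*D), -(4*D)) : ℤ×ℤ×ℤ) ((4*D, 4*D, 4*D)))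
        (fun n hn => by
          obtain ⟨b1, b2, b3⟩ := hbound n hn
          simp only [Set.mem_Icc, Prod.le_def]
          exact ⟨⟨(int_bounds hM4 b1).1, (int_bounds hM4 b2).1, (int_bounds hM4 b3).1⟩,
            ⟨(int_bounds hM4 b1).2, (int_bounds hM4 b2).2, (int_bounds hM4 b3).2⟩⟩)
        (Set.finite_Icc _ _)
      have final : ∀ i j : ℕ, i ∈ G → T i = T j → 1/2 < fareyMap^[j] ω →
          fareyMap^[i] ω = fareyMap^[j] ω := by
        intro i j hi hTeq hXj
        have rootXj : ((T i).1:ℝ) * (fareyMap^[j] ω)^2 + ((T i).2.1:ℝ) * fareyMap^[j] ω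
            + ((T i).2.2:ℝ) = 0 := by
          rw [hTeq]; exact (inv j).2.1
        have rootXi := (inv i).2.1
        have rootYi := (inv i).2.2.1
        have hYi : Y i < 0 := (inv i).1
        have hXi0 : 0 < fareyMap^[i] ω := (farey_orbit hmem hirr i).1.1
        have hAne : (T i).1 ≠ 0 :=
          lead_ne (farey_orbit hmem hirr i).2 rootXi (inv i).2.2.2
        have hv := vieta (show fareyMap^[i] ω ≠ Y i by
          intro h; rw [h] at hXi0; linarith) rootXi rootYi
        have hfac : ((T i).1:ℝ) * (fareyMap^[j] ω - fareyMap^[i] ω)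
            * (fareyMap^[j] ω - Y i) = 0 := by
          linear_combination rootXj - fareyMap^[j] ω * hv.1 - hv.2
        rcases mul_eq_zero.mp hfac with h | h
        · rcases mul_eq_zero.mp h with h' | h'
          · exact absurd h' (Int.cast_ne_zero.mpr hAne)
          · linarith [sub_eq_zero.mp h']
        · exfalso
          have := sub_eq_zero.mp h
          rw [this] at hXj
          linarith
      rcases hne.lt_or_gt with hlt | hlt
      · exact ⟨n, m, hlt, final n m hn heq hm.1⟩
      · exact ⟨m, n, hlt, final m n hm heq.symm hn.1⟩

/-- A quadratic irrational `ω ∈ (0,1)` is purely periodic under the Farey map iff its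
Galois conjugate `ω' = -b/a - ω` satisfies `ω' < 0`. -/
theorem farey_purely_periodic_iff
    (ω : ℝ) (hmem : ω ∈ Set.Ioo (0 : ℝ) 1) (hirr : Irrational ω)
    (a b c : ℤ) (ha : a ≠ 0)
    (hroot : (a : ℝ) * ω ^ 2 + (b : ℝ) * ω + (c : ℝ) = 0) :
    (∃ p : ℕ, 1 ≤ p ∧ fareyMap^[p] ω = ω) ↔ -(b : ℝ) / (a : ℝ) - ω < 0 := by
  constructor
  · exact forward_main ω hmem hirr a b c ha hroot
  · intro hneg
    obtain ⟨n, m, hnm, heq⟩ := repeat_main ω hmem hirr a b c ha hroot hneg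
    have desc : ∀ j, j ≤ n → fareyMap^[n-j] ω = fareyMap^[m-j] ω := by
      intro j
      induction j with
      | zero => intro _; simpa using heq
      | succ j ih =>
        intro hj
        have h' := ih (by omega)
        have e1 : n - j = (n - (j+1)) + 1 := by omega
        have e2 : m - j = (m - (j+1)) + 1 := by omega
        rw [e1, e2] at h'
        exact inj_step ω hmem hirr a b c ha hroot hneg (n-(j+1)) (m-(j+1)) h'
    have h0 := desc n le_rfl
    simp only [Nat.sub_self] at h0
    refine ⟨m - n, by omega, ?_⟩
    rw [← h0]
    simp
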